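/- arXiv:2411.11983 — 4 statements merged into one kernel-verified Lean document; each statement's English description precedes it below -/
import Mathlib

section
/- If K is P-invariant then the occlusion kernel K_occ is P_occ-invariant: P_occ K_occ = P_occ. -/
open MeasureTheory ProbabilityTheory Filter

noncomputable section

namespace OcclusionPaper

variable {X : Type*} [MeasurableSpace X]

/-- The mean `μ_i = P_i(f)` of `f` under `P_i`, i.e. `P` conditioned to the region `A i`. -/
def regionMean (P : Measure X) {R : ℕ} (A : Fin R → Set X) (f : X → ℝ) (i : Fin R) : ℝ :=
  ∫ x, f x ∂(P[|A i])

/-- The resolution `→Pf(x) = ∑ i, μ_i 1{x ∈ A i}`. -/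
def res (P : Measure X) {R : ℕ} (A : Fin R → Set X) (f : X → ℝ) : X → ℝ :=
  fun x => ∑ i, Set.indicator (A i) (fun _ => regionMean P A f i) x

/-- The orthogonal counterpart `←Pf = f − →Pf`. -/
def orth (P : Measure X) {R : ℕ} (A : Fin R → Set X) (f : X → ℝ) : X → ℝ :=
  fun x => f x - res P A f x

/-- Covariance of `g` and `h` under `P`. -/
def covP {Y : Type*} [MeasurableSpace Y] (P : Measure Y) (g h : Y → ℝ) : ℝ :=
  (∫ y, g y * h y ∂P) - (∫ y, g y ∂P) * (∫ y, h y ∂P)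

/-- Action of the `k`-th iterate of a (measure-valued) transition kernel on a function:
`K^k g`. -/
def kerIter {Y : Type*} [MeasurableSpace Y] (κ : Y → Measure Y) : ℕ → (Y → ℝ) → Y → ℝ
  | 0, g => g
  | (k + 1), g => fun y => ∫ z, kerIter κ k g z ∂(κ y)

/-- The joint law of the first `n` steps `(X_1, …, X_n)` of a Markov chain with initial
distribution `μ` and transition kernel `κ`. -/
def chainLawF {Y : Type*} [MeasurableSpace Y] (μ : Measure Y) (κ : Y → Measure Y) :
    (n : ℕ) → Measure (Fin n → Y)
  | 0 => Measure.dirac (fun i : Fin 0 => i.elim0)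
  | 1 => μ.map (fun x _ => x)
  | (n + 2) => (chainLawF μ κ (n + 1)).bind
      (fun xs => (κ (xs (Fin.last n))).map (fun z => Fin.snoc xs z))

/-- The distribution `μ K^t` of a Markov chain with kernel `κ` after `t` steps from `μ`. -/
def evolveF {Y : Type*} [MeasurableSpace Y] (κ : Y → Measure Y) (μ : Measure Y) : ℕ → Measure Y
  | 0 => μ
  | (t + 1) => (evolveF κ μ t).bind κ

/-- `N_i`: the number of times the finite trajectory `xs` visits region `A i`. -/
def Nreg {R n : ℕ} (A : Fin R → Set X) (xs : Fin n → X) (i : Fin R) : ℕ :=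
  ∑ t : Fin n, Set.indicator (A i) (fun _ => (1 : ℕ)) (xs t)

/-- The fully occluded (ideal) estimator
`μ̂_ideal = n⁻¹ ∑_{i=1}^R ∑_{j=1}^{N_i} f(Y_{ij})`, evaluated on an outcome consisting of the
chain trajectory together with, for each region, an array of draws from `P_i`. -/
def idealEst {R n : ℕ} (A : Fin R → Set X) (f : X → ℝ)
    (ω : (Fin n → X) × (Fin R → Fin n → X)) : ℝ :=
  (n : ℝ)⁻¹ * ∑ i : Fin R, ∑ j : Fin n, if (j : ℕ) < Nreg A ω.1 i then f (ω.2 i j) else 0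

/-- The joint law of the chain `(X_1,…,X_n)` together with, for each region `i`, an i.i.d.
array `(Y_{ij})_j` of draws from `P_i`, independent of the chain (hence in particular
conditionally independent of it given the visited regions). -/
def jointLaw (P : Measure X) {R : ℕ} (A : Fin R → Set X) (κ : X → Measure X) (n : ℕ) :
    Measure ((Fin n → X) × (Fin R → Fin n → X)) :=
  (chainLawF P κ n).prod (Measure.pi fun i => Measure.pi fun _ : Fin n => P[|A i])

/-- Bernoulli distribution on `Bool` with success probability `p` (`true` has mass `p`). -/
def bern (p : ℝ) : Measure Bool :=
  ENNReal.ofReal p • Measure.dirac true + ENNReal.ofReal (1 - p) • Measure.dirac false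

/-- The conditional law of the pair `(s, y)` given the current chain position `x`:
`s ~ Bernoulli(α(ρ x))` and `y ~ P_{ρ x}` independently. -/
def mark (P : Measure X) {R : ℕ} (A : Fin R → Set X) (ρ : X → Fin R) (α : Fin R → ℝ) (x : X) :
    Measure (Bool × X) :=
  (bern (α (ρ x))).prod (P[|A (ρ x)])

/-- The occlusion kernel `K_occ((x,s,y) → (dx',s',dy'))
 = K(x → dx')·(α(ρ x')1{s'=1} + (1−α(ρ x'))1{s'=0})·P_{ρ x'}(dy')`. -/
def Kocc (P : Measure X) {R : ℕ} (A : Fin R → Set X) (ρ : X → Fin R) (α : Fin R → ℝ)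
    (κ : X → Measure X) : X × Bool × X → Measure (X × Bool × X) :=
  fun z => (κ z.1).bind fun x' => (mark P A ρ α x').map fun sy => (x', sy.1, sy.2)

/-- The measure `P_occ(dx,s,dy) = P(dx)·(α(ρ x)1{s=1} + (1−α(ρ x))1{s=0})·P_{ρ x}(dy)`. -/
def Pocc (P : Measure X) {R : ℕ} (A : Fin R → Set X) (ρ : X → Fin R) (α : Fin R → ℝ) :
    Measure (X × Bool × X) :=
  P.bind fun x => (mark P A ρ α x).map fun sy => (x, sy.1, sy.2)

/-- `f_occ(x,s,y) = 1{s=0} f(x) + 1{s=1} f(y)`. -/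
def focc (f : X → ℝ) : X × Bool × X → ℝ :=
  fun z => if z.2.1 then f z.2.2 else f z.1

/-- `f_α(x) = (1 − α(ρ x)) f(x) + α(ρ x) →Pf(x)`. -/
def falpha (P : Measure X) {R : ℕ} (A : Fin R → Set X) (ρ : X → Fin R) (α : Fin R → ℝ)
    (f : X → ℝ) : X → ℝ :=
  fun x => (1 - α (ρ x)) * f x + α (ρ x) * res P A f x

/-- `f_a(x) = (1 − α(ρ x)) f(x)`. -/
def fa {R : ℕ} (ρ : X → Fin R) (α : Fin R → ℝ) (f : X → ℝ) : X → ℝ :=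
  fun x => (1 - α (ρ x)) * f x

end OcclusionPaper

namespace OcclusionPaper


lemma bern_isProb {p : ℝ} (h0 : 0 ≤ p) (h1 : p ≤ 1) : IsProbabilityMeasure (bern p) := by
  constructor
  simp only [bern, Measure.add_apply, Measure.smul_apply, measure_univ, smul_eq_mul, mul_one]
  rw [← ENNReal.ofReal_add h0 (by linarith)]
  norm_num

lemma mark_isProb {X : Type*} [MeasurableSpace X] (P : Measure X) [IsProbabilityMeasure P]
    {R : ℕ} (A : Fin R → Set X)
    (hpos : ∀ i, 0 < P (A i)) (ρ : X → Fin R) (α : Fin R → ℝ)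
    (hα0 : ∀ i, 0 ≤ α i) (hα1 : ∀ i, α i ≤ 1) (x : X) :
    IsProbabilityMeasure (mark P A ρ α x) := by
  haveI := bern_isProb (hα0 (ρ x)) (hα1 (ρ x))
  haveI := cond_isProbabilityMeasure (μ := P) (s := A (ρ x)) (hpos (ρ x)).ne'
  exact Measure.prod.instIsProbabilityMeasure _ _

lemma mark_measurable {X : Type*} [MeasurableSpace X] (P : Measure X) {R : ℕ}
    (A : Fin R → Set X) (ρ : X → Fin R)
    (hρm : Measurable ρ) (α : Fin R → ℝ) : Measurable (mark P A ρ α) := by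
  have : mark P A ρ α = (fun i => (bern (α i)).prod (P[|A i])) ∘ ρ := rfl
  rw [this]
  exact measurable_from_top.comp hρm

lemma Measure.bind_map' {α β γ : Type*} [MeasurableSpace α] [MeasurableSpace β] [MeasurableSpace γ]
    {μ : Measure α} {f : α → β} {g : β → Measure γ} (hf : Measurable f) (hg : Measurable g) :
    (μ.map f).bind g = μ.bind (fun a => g (f a)) := by
  rw [← Measure.bind_dirac_eq_map μ hf, Measure.bind_bind
    (show Measurable fun a => Measure.dirac (f a) from Measure.measurable_dirac.comp hf).aemeasurable hg.aemeasurable]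
  simp_rw [Measure.dirac_bind hg]

/-- If `K` is `P`-invariant then the occlusion kernel `K_occ` is
`P_occ`-invariant: `P_occ K_occ = P_occ`. -/
theorem Kocc_invariant
    {X : Type*} [MeasurableSpace X]
    (P : Measure X) [IsProbabilityMeasure P] {R : ℕ} (A : Fin R → Set X)
    (hA : ∀ i, MeasurableSet (A i))
    (hdisj : Pairwise fun i j => Disjoint (A i) (A j))
    (hcover : (⋃ i, A i) = Set.univ)
    (hpos : ∀ i, 0 < P (A i))
    (ρ : X → Fin R) (hρm : Measurable ρ) (hρ : ∀ x, x ∈ A (ρ x))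
    (α : Fin R → ℝ) (hα0 : ∀ i, 0 ≤ α i) (hα1 : ∀ i, α i ≤ 1)
    (K : Kernel X X) [IsMarkovKernel K] (hK : K.Invariant P) :
    (Pocc P A ρ α).bind (Kocc P A ρ α (fun x => K x)) = Pocc P A ρ α := by
  set markK : Kernel X (Bool × X) := ⟨mark P A ρ α, mark_measurable P A ρ hρm α⟩ with hmarkK
  haveI : IsMarkovKernel markK := ⟨fun x => mark_isProb P A hpos ρ α hα0 hα1 x⟩
  set G : X → Measure (X × Bool × X) := fun x => (mark P A ρ α x).map (Prod.mk x) with hG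
  have hGm : Measurable G := by
    apply Measure.measurable_measure.2
    intro s hs
    have : ∀ x, G x s = markK x {b | (x, b) ∈ s} := by
      intro x
      rw [hG]
      rw [Measure.map_apply measurable_prodMk_left hs]
      rfl
    simp_rw [this]
    exact Kernel.measurable_kernel_prodMk_left hs
  have hPocc : Pocc P A ρ α = P.bind G := rfl
  have hKocc : Kocc P A ρ α (fun x => K x) = fun z => (K z.1).bind G := rfl
  have hHm : Measurable (fun z : X × Bool × X => (K z.1).bind G) :=
    (Measure.measurable_bind' hGm).comp (K.measurable.comp measurable_fst)
  rw [hPocc, hKocc, Measure.bind_bind hGm.aemeasurable hHm.aemeasurable]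
  have inner : ∀ x, (G x).bind (fun z : X × Bool × X => (K z.1).bind G) = (K x).bind G := by
    intro x
    rw [hG, Measure.bind_map' measurable_prodMk_left hHm]
    have : (fun a : Bool × X => (K (x, a).1).bind G) = fun _ => (K x).bind G := rfl
    rw [this, Measure.bind_const]
    haveI := mark_isProb P A hpos ρ α hα0 hα1 x
    simp
    rfl
  simp_rw [inner]
  rw [← Measure.bind_bind K.measurable.aemeasurable hGm.aemeasurable, hK.def]

end OcclusionPaper
end
end

section
/- If the kernel K is P-reversible, then the occlusion kernel K_occ is P_occ-reversible, i.e. P_occ(dx,s,dy)·K_occ((x,s,y) → (dx',s',dy')) = P_occ(dx',s',dy')·K_occ((x',s',y') → (dx,s,dy)) for all measurable rectangles. -/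
open MeasureTheory ProbabilityTheory Filter

noncomputable section

namespace OcclusionPaper

/-- If `K` is `P`-reversible then `K_occ` is `P_occ`-reversible (detailed
balance over all measurable rectangles). -/
theorem Kocc_reversible
    {X : Type*} [MeasurableSpace X]
    (P : Measure X) [IsProbabilityMeasure P] {R : ℕ} (A : Fin R → Set X)
    (hA : ∀ i, MeasurableSet (A i))
    (hdisj : Pairwise fun i j => Disjoint (A i) (A j))
    (hcover : (⋃ i, A i) = Set.univ)
    (hpos : ∀ i, 0 < P (A i))
    (ρ : X → Fin R) (hρm : Measurable ρ) (hρ : ∀ x, x ∈ A (ρ x))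
    (α : Fin R → ℝ) (hα0 : ∀ i, 0 ≤ α i) (hα1 : ∀ i, α i ≤ 1)
    (K : Kernel X X) [IsMarkovKernel K] (hK : K.Invariant P)
    (hrev : ∀ B C : Set X, MeasurableSet B → MeasurableSet C →
      ∫⁻ x in B, K x C ∂P = ∫⁻ x in C, K x B ∂P) :
    ∀ (B₁ B₂ C₁ C₂ : Set X) (Bs Cs : Set Bool),
      MeasurableSet B₁ → MeasurableSet B₂ → MeasurableSet C₁ → MeasurableSet C₂ →
      ∫⁻ z in B₁ ×ˢ (Bs ×ˢ B₂),
          Kocc P A ρ α (fun x => K x) z (C₁ ×ˢ (Cs ×ˢ C₂)) ∂(Pocc P A ρ α)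
        = ∫⁻ z in C₁ ×ˢ (Cs ×ˢ C₂),
            Kocc P A ρ α (fun x => K x) z (B₁ ×ˢ (Bs ×ˢ B₂)) ∂(Pocc P A ρ α) := by
  intro B₁ B₂ C₁ C₂ Bs Cs hB₁ hB₂ hC₁ hC₂
  classical
  -- the conditional mark measures, region by region
  set ν : Fin R → Measure (Bool × X) := fun i => (bern (α i)).prod (P[|A i]) with hνdef
  have hνprob : ∀ i, IsProbabilityMeasure (ν i) := by
    intro i
    have h1 : IsProbabilityMeasure (bern (α i)) := by
      constructor
      have h01 : (0:ℝ) ≤ 1 - α i := by linarith [hα1 i]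
      simp [bern, ← ENNReal.ofReal_add (hα0 i) h01]
    have h2 : IsProbabilityMeasure (P[|A i]) :=
      ProbabilityTheory.cond_isProbabilityMeasure (hpos i).ne'
    exact Measure.prod.instIsProbabilityMeasure _ _
  -- membership characterization
  have hmem : ∀ (x : X) (i : Fin R), x ∈ A i ↔ ρ x = i := by
    intro x i
    constructor
    · intro hx
      by_contra h
      exact (hdisj h).le_bot ⟨hρ x, hx⟩
    · rintro rfl; exact hρ x
  -- the kernel sending x to δ_x ⊗ ν (ρ x)
  let κ₂ : Kernel X (Bool × X) :=
    { toFun := fun x => ν (ρ x)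
      measurable' := (measurable_of_countable ν).comp hρm }
  haveI : IsMarkovKernel κ₂ := ⟨fun x => hνprob (ρ x)⟩
  let κ' : Kernel X (X × Bool × X) := Kernel.id ×ₖ κ₂
  have hκ'app : ∀ x, κ' x = (Measure.dirac x).prod (ν (ρ x)) := by
    intro x
    rw [Kernel.prod_apply, Kernel.id_apply]
    rfl
  have hmap : ∀ x : X,
      (mark P A ρ α x).map (fun sy : Bool × X => (x, sy.1, sy.2)) = κ' x := by
    intro x
    haveI := hνprob (ρ x)
    rw [hκ'app, Measure.dirac_prod]
    rfl
  have hPocc : Pocc P A ρ α = P.bind (fun x => κ' x) := by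
    unfold Pocc
    exact congrArg (Measure.bind P) (funext hmap)
  have hKocc : ∀ z : X × Bool × X,
      Kocc P A ρ α (fun x => K x) z = (K z.1).bind (fun x => κ' x) := by
    intro z
    unfold Kocc
    exact congrArg (Measure.bind (K z.1)) (funext hmap)
  -- region mark masses
  set m : Set Bool → Set X → Fin R → ENNReal := fun S T i => ν i (S ×ˢ T) with hmdef
  have hBool : ∀ S : Set Bool, MeasurableSet S := fun S => trivial
  have hκ'rect : ∀ (x : X) (D₁ : Set X) (Ds : Set Bool) (D₂ : Set X),
      MeasurableSet D₁ →
      κ' x (D₁ ×ˢ (Ds ×ˢ D₂)) = D₁.indicator (fun y => m Ds D₂ (ρ y)) x := by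
    intro x D₁ Ds D₂ hD₁
    haveI := hνprob (ρ x)
    rw [hκ'app, Measure.prod_prod]
    by_cases hx : x ∈ D₁
    · rw [Set.indicator_of_mem hx, Measure.dirac_apply' _ hD₁, Set.indicator_of_mem hx,
        Pi.one_apply, one_mul]
    · rw [Set.indicator_of_notMem hx, Measure.dirac_apply' _ hD₁,
        Set.indicator_of_notMem hx, zero_mul]
  -- indicator-sum expansion over regions
  have hsum : ∀ (D₁ : Set X) (Ds : Set Bool) (D₂ : Set X) (x : X),
      D₁.indicator (fun y => m Ds D₂ (ρ y)) x
        = ∑ j : Fin R, (D₁ ∩ A j).indicator (fun _ => m Ds D₂ j) x := by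
    intro D₁ Ds D₂ x
    by_cases hx : x ∈ D₁
    · rw [Set.indicator_of_mem hx, Finset.sum_eq_single (ρ x)]
      · rw [Set.indicator_of_mem (show x ∈ D₁ ∩ A (ρ x) from ⟨hx, hρ x⟩)]
      · intro j _ hj
        apply Set.indicator_of_notMem
        rintro ⟨-, hxj⟩
        exact hj ((hmem x j).mp hxj).symm
      · intro h; exact absurd (Finset.mem_univ _) h
    · rw [Set.indicator_of_notMem hx]
      symm
      apply Finset.sum_eq_zero
      intro j _
      apply Set.indicator_of_notMem
      intro h
      exact hx h.1
  -- measurability of the one-step function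
  have hGm : ∀ (C₁' : Set X) (Cs' : Set Bool) (C₂' : Set X), MeasurableSet C₁' →
      Measurable fun x => ∑ j : Fin R, m Cs' C₂' j * K x (C₁' ∩ A j) := by
    intro C₁' Cs' C₂' hC₁'
    exact Finset.measurable_sum _ fun j _ =>
      (K.measurable_coe (hC₁'.inter (hA j))).const_mul _
  -- value of the occlusion kernel on a rectangle
  have hKoccRect : ∀ (C₁' : Set X) (Cs' : Set Bool) (C₂' : Set X), MeasurableSet C₁' →
      MeasurableSet C₂' → ∀ z : X × Bool × X,
      Kocc P A ρ α (fun x => K x) z (C₁' ×ˢ (Cs' ×ˢ C₂'))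
        = ∑ j : Fin R, m Cs' C₂' j * K z.1 (C₁' ∩ A j) := by
    intro C₁' Cs' C₂' hC₁' hC₂' z
    rw [hKocc, Measure.bind_apply (hC₁'.prod ((hBool Cs').prod hC₂')) κ'.measurable.aemeasurable]
    have hval : ∀ x' : X, κ' x' (C₁' ×ˢ (Cs' ×ˢ C₂'))
        = ∑ j : Fin R, (C₁' ∩ A j).indicator (fun _ => m Cs' C₂' j) x' := by
      intro x'; rw [hκ'rect x' C₁' Cs' C₂' hC₁', hsum]
    simp_rw [hval]
    rw [lintegral_finset_sum _ fun j _ =>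
      measurable_const.indicator (hC₁'.inter (hA j))]
    refine Finset.sum_congr rfl fun j _ => ?_
    rw [lintegral_indicator (hC₁'.inter (hA j)), setLIntegral_const]
  -- the key rectangle formula
  have key : ∀ (B₁' B₂' C₁' C₂' : Set X) (Bs' Cs' : Set Bool),
      MeasurableSet B₁' → MeasurableSet B₂' → MeasurableSet C₁' → MeasurableSet C₂' →
      ∫⁻ z in B₁' ×ˢ (Bs' ×ˢ B₂'),
          Kocc P A ρ α (fun x => K x) z (C₁' ×ˢ (Cs' ×ˢ C₂')) ∂(Pocc P A ρ α)
        = ∑ i : Fin R, ∑ j : Fin R,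
            m Bs' B₂' i * m Cs' C₂' j * ∫⁻ x in B₁' ∩ A i, K x (C₁' ∩ A j) ∂P := by
    intro B₁' B₂' C₁' C₂' Bs' Cs' hB₁' hB₂' hC₁' hC₂'
    set G : X → ENNReal := fun x => ∑ j : Fin R, m Cs' C₂' j * K x (C₁' ∩ A j) with hGdef
    have hGmeas : Measurable G := hGm C₁' Cs' C₂' hC₁'
    have hBrect : MeasurableSet (B₁' ×ˢ (Bs' ×ˢ B₂')) := hB₁'.prod ((hBool Bs').prod hB₂')
    have hindm : Measurable ((B₁' ×ˢ (Bs' ×ˢ B₂')).indicator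
        (fun z : X × Bool × X => G z.1)) :=
      (hGmeas.comp measurable_fst).indicator hBrect
    calc ∫⁻ z in B₁' ×ˢ (Bs' ×ˢ B₂'),
            Kocc P A ρ α (fun x => K x) z (C₁' ×ˢ (Cs' ×ˢ C₂')) ∂(Pocc P A ρ α)
        = ∫⁻ z, (B₁' ×ˢ (Bs' ×ˢ B₂')).indicator (fun z : X × Bool × X => G z.1) z
            ∂(P.bind fun x => κ' x) := by
          rw [hPocc, ← lintegral_indicator hBrect]
          refine lintegral_congr fun z => ?_
          by_cases hz : z ∈ B₁' ×ˢ (Bs' ×ˢ B₂')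
          · rw [Set.indicator_of_mem hz, Set.indicator_of_mem hz,
              hKoccRect C₁' Cs' C₂' hC₁' hC₂' z]
          · rw [Set.indicator_of_notMem hz, Set.indicator_of_notMem hz]
      _ = ∫⁻ x, ∫⁻ w, (B₁' ×ˢ (Bs' ×ˢ B₂')).indicator (fun z : X × Bool × X => G z.1) w
            ∂(κ' x) ∂P := by
          rw [Measure.lintegral_bind κ'.measurable.aemeasurable hindm.aemeasurable]
      _ = ∫⁻ x, B₁'.indicator (fun y => G y * m Bs' B₂' (ρ y)) x ∂P := by
          refine lintegral_congr fun x => ?_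
          haveI := hνprob (ρ x)
          rw [hκ'app, Measure.dirac_prod,
            lintegral_map hindm measurable_prodMk_left]
          have hpt : ∀ sy : Bool × X,
              (B₁' ×ˢ (Bs' ×ˢ B₂')).indicator (fun z : X × Bool × X => G z.1) (x, sy)
                = (Bs' ×ˢ B₂').indicator (fun _ => B₁'.indicator G x) sy := by
            intro sy
            by_cases hx : x ∈ B₁' <;> by_cases hsy : sy ∈ Bs' ×ˢ B₂' <;>
              simp [Set.indicator_apply, Set.mem_prod, hx, hsy,
                Set.mem_prod.mp, and_comm] <;>
              simp_all [Set.mem_prod]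
          simp_rw [hpt]
          rw [lintegral_indicator ((hBool Bs').prod hB₂'), setLIntegral_const]
          by_cases hx : x ∈ B₁'
          · rw [Set.indicator_of_mem hx, Set.indicator_of_mem hx]
          · rw [Set.indicator_of_notMem hx, Set.indicator_of_notMem hx, zero_mul]
      _ = ∑ i : Fin R, ∑ j : Fin R,
            m Bs' B₂' i * m Cs' C₂' j * ∫⁻ x in B₁' ∩ A i, K x (C₁' ∩ A j) ∂P := by
          have hsum2 : ∀ x : X,
              B₁'.indicator (fun y => G y * m Bs' B₂' (ρ y)) x
                = ∑ i : Fin R, (B₁' ∩ A i).indicator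
                    (fun y => m Bs' B₂' i * G y) x := by
            intro x
            by_cases hx : x ∈ B₁'
            · rw [Set.indicator_of_mem hx, Finset.sum_eq_single (ρ x)]
              · rw [Set.indicator_of_mem (show x ∈ B₁' ∩ A (ρ x) from ⟨hx, hρ x⟩), mul_comm]
              · intro j _ hj
                apply Set.indicator_of_notMem
                rintro ⟨-, hxj⟩
                exact hj ((hmem x j).mp hxj).symm
              · intro h; exact absurd (Finset.mem_univ _) h
            · rw [Set.indicator_of_notMem hx]
              symm
              apply Finset.sum_eq_zero
              intro j _
              apply Set.indicator_of_notMem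
              intro h
              exact hx h.1
          simp_rw [hsum2]
          rw [lintegral_finset_sum _ fun i _ =>
            (hGmeas.const_mul _).indicator (hB₁'.inter (hA i))]
          refine Finset.sum_congr rfl fun i _ => ?_
          rw [lintegral_indicator (hB₁'.inter (hA i)),
            lintegral_const_mul _ hGmeas, hGdef]
          rw [lintegral_finset_sum _ fun j _ =>
            (K.measurable_coe (hC₁'.inter (hA j))).const_mul _]
          rw [Finset.mul_sum]
          refine Finset.sum_congr rfl fun j _ => ?_
          rw [lintegral_const_mul _ (K.measurable_coe (hC₁'.inter (hA j))), mul_assoc]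
  rw [key B₁ B₂ C₁ C₂ Bs Cs hB₁ hB₂ hC₁ hC₂,
    key C₁ C₂ B₁ B₂ Cs Bs hC₁ hC₂ hB₁ hB₂, Finset.sum_comm]
  refine Finset.sum_congr rfl fun i _ => Finset.sum_congr rfl fun j _ => ?_
  rw [hrev (B₁ ∩ A j) (C₁ ∩ A i) (hB₁.inter (hA j)) (hC₁.inter (hA i)),
    mul_comm (m Bs B₂ j) (m Cs C₂ i)]

end OcclusionPaper
end
end

section
/- The occlusion process inherits integral-probability-metric convergence: suppose there exist C_μ > 0 and r : ℕ\{0} → [0,∞) such that for every f : X → [0,1] measurable and every t ≥ 1, |μK^t(f) − P(f)| ≤ C_μ r(t). Then for every initial probability measure ν on X × {0,1} × X whose first marginal is μ, every f : X → [0,1] measurable, and every t ≥ 1, the function g(x,s,y) := 1{s=0}f(x) + 1{s=1}f(y) satisfies |νK_occ^t(g) − P_occ(g)| ≤ C_μ r(t). -/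
open MeasureTheory ProbabilityTheory Filter

noncomputable section

namespace OcclusionPaper

section Aux

variable {β γ δ : Type*} [MeasurableSpace β] [MeasurableSpace γ] [MeasurableSpace δ]

lemma integrable_of_bdd {g : β → ℝ} (m : Measure β) [IsFiniteMeasure m]
    (hg : Measurable g) (C : ℝ) (hC : ∀ y, |g y| ≤ C) : Integrable g m :=
  (integrable_const C).mono' hg.aestronglyMeasurable (ae_of_all _ fun y => by
    simpa using hC y)

lemma integral_bind' (m : Measure β) [IsFiniteMeasure m] {κ : β → Measure γ}
    (hκ : Measurable κ) (hκp : ∀ b, IsProbabilityMeasure (κ b))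
    {g : γ → ℝ} (hg : Measurable g) (hg0 : ∀ y, 0 ≤ g y) (hg1 : ∀ y, g y ≤ 1) :
    ∫ y, g y ∂(m.bind κ) = ∫ b, ∫ y, g y ∂(κ b) ∂m := by
  have hgE : Measurable fun y => ENNReal.ofReal (g y) := hg.ennreal_ofReal
  have hb : ∀ b, ∫ y, g y ∂(κ b) = (∫⁻ y, ENNReal.ofReal (g y) ∂(κ b)).toReal := fun b =>
    integral_eq_lintegral_of_nonneg_ae (ae_of_all _ hg0) hg.aestronglyMeasurable
  have hle : ∀ (ν : Measure γ), IsProbabilityMeasure ν →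
      (∫⁻ y, ENNReal.ofReal (g y) ∂ν) ≤ 1 := by
    intro ν hν
    calc (∫⁻ y, ENNReal.ofReal (g y) ∂ν) ≤ ∫⁻ _, 1 ∂ν :=
          lintegral_mono fun y => ENNReal.ofReal_le_one.2 (hg1 y)
      _ = 1 := by simp [hν.measure_univ]
  rw [integral_eq_lintegral_of_nonneg_ae (ae_of_all _ hg0) hg.aestronglyMeasurable,
    Measure.lintegral_bind hκ.aemeasurable hgE.aemeasurable]
  simp_rw [hb]
  have hmeas : Measurable fun b => ∫⁻ y, ENNReal.ofReal (g y) ∂(κ b) :=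
    (Measure.measurable_lintegral hgE).comp hκ
  exact (integral_toReal hmeas.aemeasurable
    (ae_of_all _ fun b => lt_of_le_of_lt (hle _ (hκp b)) ENNReal.one_lt_top)).symm

lemma bind_map' (m : Measure β) {g : β → γ} (hg : Measurable g)
    {κ : γ → Measure δ} (hκ : Measurable κ) :
    (m.map g).bind κ = m.bind (fun b => κ (g b)) := by
  have hκg : Measurable fun b => κ (g b) := hκ.comp hg
  ext s hs
  have hc : Measurable fun a : γ => κ a s := (Measure.measurable_coe hs).comp hκ
  rw [Measure.bind_apply hs hκ.aemeasurable, Measure.bind_apply hs hκg.aemeasurable, lintegral_map hc hg]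

lemma isProbabilityMeasure_bind' (m : Measure β) [IsProbabilityMeasure m]
    {κ : β → Measure γ} (hκ : Measurable κ) (hκp : ∀ b, IsProbabilityMeasure (κ b)) :
    IsProbabilityMeasure (m.bind κ) := by
  constructor
  rw [Measure.bind_apply MeasurableSet.univ hκ.aemeasurable]
  have h : ∀ b, κ b Set.univ = 1 := fun b => (hκp b).measure_univ
  simp [h]

end Aux

lemma bern_isProbabilityMeasure {p : ℝ} (hp0 : 0 ≤ p) (hp1 : p ≤ 1) :
    IsProbabilityMeasure (bern p) := by
  constructor
  simp only [bern, Measure.coe_add, Pi.add_apply, Measure.smul_apply, smul_eq_mul,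
    measure_univ, mul_one]
  rw [← ENNReal.ofReal_add hp0 (by linarith)]
  norm_num

lemma bern_singleton_true {p : ℝ} (hp0 : 0 ≤ p) (hp1 : p ≤ 1) :
    bern p {true} = ENNReal.ofReal p := by
  simp [bern, Measure.dirac_apply' _ (measurableSet_singleton (true : Bool)),
    Set.indicator_of_mem, Set.indicator_of_notMem]

lemma bern_singleton_false {p : ℝ} (hp0 : 0 ≤ p) (hp1 : p ≤ 1) :
    bern p {false} = ENNReal.ofReal (1 - p) := by
  simp [bern, Measure.dirac_apply' _ (measurableSet_singleton (false : Bool)),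
    Set.indicator_of_mem, Set.indicator_of_notMem]

lemma integral_bern {p : ℝ} (hp0 : 0 ≤ p) (hp1 : p ≤ 1) (g : Bool → ℝ) :
    ∫ s, g s ∂(bern p) = p * g true + (1 - p) * g false := by
  haveI := bern_isProbabilityMeasure hp0 hp1
  rw [integral_fintype Integrable.of_finite]
  rw [show (Finset.univ : Finset Bool) = {true, false} by decide]
  rw [Finset.sum_insert (by decide), Finset.sum_singleton]
  rw [Measure.real, Measure.real, bern_singleton_true hp0 hp1, bern_singleton_false hp0 hp1,
    ENNReal.toReal_ofReal hp0, ENNReal.toReal_ofReal (by linarith)]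
  simp [smul_eq_mul]

/-- The occlusion process inherits integral-probability-metric (total
variation type) convergence: if `|μK^t(f) − P(f)| ≤ C_μ r(t)` for all measurable
`f : X → [0,1]` and `t ≥ 1`, then for every initial law `ν` on the extended space whose
first marginal is `μ`, `|νK_occ^t(g) − P_occ(g)| ≤ C_μ r(t)` for the corresponding
`g(x,s,y) = 1{s=0}f(x) + 1{s=1}f(y)`. -/
theorem ipm_convergence_inheritance
    {X : Type*} [MeasurableSpace X]
    (P : Measure X) [IsProbabilityMeasure P] {R : ℕ} (A : Fin R → Set X)
    (hA : ∀ i, MeasurableSet (A i))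
    (hdisj : Pairwise fun i j => Disjoint (A i) (A j))
    (hcover : (⋃ i, A i) = Set.univ)
    (hpos : ∀ i, 0 < P (A i))
    (ρ : X → Fin R) (hρm : Measurable ρ) (hρ : ∀ x, x ∈ A (ρ x))
    (α : Fin R → ℝ) (hα0 : ∀ i, 0 ≤ α i) (hα1 : ∀ i, α i ≤ 1)
    (K : Kernel X X) [IsMarkovKernel K] (hK : K.Invariant P)
    (μ : Measure X) [IsProbabilityMeasure μ]
    (Cμ : ℝ) (hC : 0 < Cμ) (r : ℕ → ℝ) (hr : ∀ t, 0 ≤ r t)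
    (hconv : ∀ f : X → ℝ, Measurable f → (∀ x, f x ∈ Set.Icc (0 : ℝ) 1) →
      ∀ t, 1 ≤ t →
        |(∫ x, f x ∂(evolveF (fun x => K x) μ t)) - ∫ x, f x ∂P| ≤ Cμ * r t) :
    ∀ ν : Measure (X × Bool × X), IsProbabilityMeasure ν →
      (ν.map fun z => z.1) = μ →
      ∀ f : X → ℝ, Measurable f → (∀ x, f x ∈ Set.Icc (0 : ℝ) 1) →
      ∀ t, 1 ≤ t →
        |(∫ z, focc f z ∂(evolveF (Kocc P A ρ α (fun x => K x)) ν t))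
            - ∫ z, focc f z ∂(Pocc P A ρ α)| ≤ Cμ * r t := by
  intro ν hν hνμ f hf hf01 t ht
  obtain ⟨n, rfl⟩ : ∃ n, t = n + 1 := ⟨t - 1, (Nat.succ_pred_eq_of_pos ht).symm⟩
  -- probability measure instances for the building blocks
  haveI hcondP : ∀ i, IsProbabilityMeasure (P[|A i]) := fun i =>
    cond_isProbabilityMeasure (hpos i).ne'
  haveI hbernP : ∀ i, IsProbabilityMeasure (bern (α i)) := fun i =>
    bern_isProbabilityMeasure (hα0 i) (hα1 i)
  have hmarkP : ∀ x, IsProbabilityMeasure (mark P A ρ α x) := fun x => by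
    unfold mark; infer_instance
  -- the kernel `x ↦ mark x` and `x ↦ δ_x ⊗ mark x`
  let markK : Kernel X (Bool × X) :=
    ⟨fun x => mark P A ρ α x, (measurable_of_countable (fun i => (bern (α i)).prod (P[|A i]))).comp hρm⟩
  haveI : IsMarkovKernel markK := ⟨fun x => hmarkP x⟩
  let step : X → Measure (X × Bool × X) := fun x => (Kernel.id ×ₖ markK) x
  have hstepm : Measurable step := (Kernel.id ×ₖ markK).measurable
  have hstep_eq : ∀ x, step x = (mark P A ρ α x).map (fun sy => (x, sy.1, sy.2)) := by
    intro x
    show (Kernel.id ×ₖ markK) x = _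
    rw [Kernel.prod_apply, Kernel.id_apply, Measure.dirac_prod]
    rfl
  haveI : IsMarkovKernel (Kernel.id ×ₖ markK) := by infer_instance
  have hstepP : ∀ x, IsProbabilityMeasure (step x) := fun x => inferInstance
  -- the one-step kernel `Kstep x = (K x).bind step`
  let Kstep : X → Measure (X × Bool × X) := fun x => (K x).bind step
  have hKm : Measurable (fun x => (K x : Measure X)) := K.measurable
  have hKstepm : Measurable Kstep := (Measure.measurable_bind' hstepm).comp hKm
  have hKstepP : ∀ x, IsProbabilityMeasure (Kstep x) := fun x =>
    isProbabilityMeasure_bind' (K x) hstepm hstepP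
  have hKfst : Measurable fun z : X × Bool × X => Kstep z.1 := hKstepm.comp measurable_fst
  have hKocc : Kocc P A ρ α (fun x => K x) = fun z => Kstep z.1 := by
    funext z
    show (K z.1).bind _ = (K z.1).bind step
    congr 1
    funext x'
    exact (hstep_eq x').symm
  have hKoccm : Measurable (Kocc P A ρ α (fun x => K x)) := by
    rw [hKocc]; exact hKfst
  -- probability along the chains
  have hev : ∀ s, IsProbabilityMeasure (evolveF (fun x => K x) μ s) := by
    intro s
    induction s with
    | zero =>
      rw [show evolveF (fun x => K x) μ 0 = μ from rfl]
      infer_instance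
    | succ s ih =>
      rw [show evolveF (fun x => K x) μ (s + 1)
        = (evolveF (fun x => K x) μ s).bind (fun x => (K x : Measure X)) from rfl]
      exact @isProbabilityMeasure_bind' _ _ _ _ _ ih _ hKm (fun x => inferInstance)
  -- structure of the occluded chain
  have hstruct : ∀ s : ℕ, evolveF (Kocc P A ρ α (fun x => K x)) ν (s + 1)
      = (evolveF (fun x => K x) μ s).bind Kstep := by
    intro s
    induction s with
    | zero =>
      show ν.bind _ = μ.bind Kstep
      rw [hKocc, ← hνμ, bind_map' ν measurable_fst hKstepm]
    | succ s ih =>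
      show (evolveF (Kocc P A ρ α (fun x => K x)) ν (s + 1)).bind _ = _
      rw [ih, Measure.bind_bind hKstepm.aemeasurable hKoccm.aemeasurable]
      show _ = ((evolveF (fun x => K x) μ s).bind (fun x => (K x : Measure X))).bind Kstep
      rw [Measure.bind_bind hKm.aemeasurable hKstepm.aemeasurable]
      congr 1
      funext x
      show ((K x).bind step).bind _ = (K x).bind Kstep
      rw [hKocc, Measure.bind_bind hstepm.aemeasurable hKfst.aemeasurable]
      congr 1
      funext x'
      show (step x').bind (fun z => Kstep z.1) = Kstep x'
      have he : Measurable fun sy : Bool × X => ((x', sy.1, sy.2) : X × Bool × X) :=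
        measurable_prodMk_left
      rw [hstep_eq x', bind_map' (mark P A ρ α x') he hKfst]
      have : (fun sy : Bool × X => Kstep ((x', sy.1, sy.2) : X × Bool × X).1)
          = fun _ => Kstep x' := rfl
      rw [this, Measure.bind_const, (hmarkP x').measure_univ, one_smul]
  -- measurability and bounds for `focc f`
  have hfoccm : Measurable (focc f) := by
    have hset : MeasurableSet {z : X × Bool × X | z.2.1 = true} :=
      (measurable_fst.comp measurable_snd) (measurableSet_singleton true)
    exact Measurable.ite hset (hf.comp (measurable_snd.comp measurable_snd))
      (hf.comp measurable_fst)
  have hfocc0 : ∀ z, 0 ≤ focc f z := by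
    rintro ⟨x, s, y⟩
    cases s
    · exact (hf01 x).1
    · exact (hf01 y).1
  have hfocc1 : ∀ z, focc f z ≤ 1 := by
    rintro ⟨x, s, y⟩
    cases s
    · exact (hf01 x).2
    · exact (hf01 y).2
  -- the resolved function
  have hres : ∀ x, res P A f x = regionMean P A f (ρ x) := by
    intro x
    unfold res
    rw [Finset.sum_eq_single_of_mem (ρ x) (Finset.mem_univ _)]
    · exact Set.indicator_of_mem (hρ x) _
    · intro i _ hi
      apply Set.indicator_of_notMem
      intro hx
      exact Set.disjoint_left.mp (hdisj hi) hx (hρ x)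
  have hμi : ∀ i, regionMean P A f i ∈ Set.Icc (0 : ℝ) 1 := by
    intro i
    haveI := hcondP i
    constructor
    · exact integral_nonneg fun x => (hf01 x).1
    · calc ∫ x, f x ∂(P[|A i]) ≤ ∫ _, (1 : ℝ) ∂(P[|A i]) :=
            integral_mono (integrable_of_bdd _ hf 1 fun y => abs_le.2 ⟨by linarith [(hf01 y).1],
              (hf01 y).2⟩) (integrable_const 1) fun x => (hf01 x).2
        _ = 1 := by simp
  set G : X → ℝ := fun x => (1 - α (ρ x)) * f x + α (ρ x) * regionMean P A f (ρ x) with hG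
  have hGm : Measurable G := by
    apply Measurable.add
    · exact (measurable_const.sub ((measurable_of_countable α).comp hρm)).mul hf
    · exact ((measurable_of_countable α).comp hρm).mul
        ((measurable_of_countable (regionMean P A f)).comp hρm)
  have hG01 : ∀ x, G x ∈ Set.Icc (0 : ℝ) 1 := by
    intro x
    obtain ⟨h1, h2⟩ := hf01 x
    obtain ⟨h3, h4⟩ := hμi (ρ x)
    have h5 := hα0 (ρ x); have h6 := hα1 (ρ x)
    constructor
    · simp only [hG]; nlinarith
    · simp only [hG]; nlinarith
  -- integral of `focc f` under one marking step
  have hstep_int : ∀ x, ∫ z, focc f z ∂(step x) = G x := by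
    intro x
    rw [hstep_eq x,
      integral_map measurable_prodMk_left.aemeasurable hfoccm.aestronglyMeasurable]
    have : (fun sy : Bool × X => focc f (x, sy.1, sy.2))
        = fun sy : Bool × X => if sy.1 then f sy.2 else f x := rfl
    rw [this]
    haveI := hcondP (ρ x)
    haveI := hbernP (ρ x)
    have hint : Integrable (fun sy : Bool × X => if sy.1 then f sy.2 else f x)
        ((bern (α (ρ x))).prod (P[|A (ρ x)])) := by
      apply integrable_of_bdd
      · exact Measurable.ite ((measurable_fst (measurableSet_singleton true)))
          (hf.comp measurable_snd) measurable_const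
      · rintro ⟨s, y⟩
        cases s
        · show |f x| ≤ 1
          exact abs_le.2 ⟨by linarith [(hf01 x).1], (hf01 x).2⟩
        · show |f y| ≤ 1
          exact abs_le.2 ⟨by linarith [(hf01 y).1], (hf01 y).2⟩
    rw [show (mark P A ρ α x : Measure (Bool × X)) = (bern (α (ρ x))).prod (P[|A (ρ x)]) from rfl,
      MeasureTheory.integral_prod _ hint,
      integral_bern (hα0 (ρ x)) (hα1 (ρ x))]
    have h1 : ∫ y, (if (true : Bool) then f y else f x) ∂(P[|A (ρ x)])
        = regionMean P A f (ρ x) := by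
      simp only [if_true]; rfl
    have h2 : ∫ y, (if (false : Bool) then f y else f x) ∂(P[|A (ρ x)]) = f x := by
      simp only [Bool.false_eq_true, if_false]
      simp [integral_const]
    rw [h1, h2]
    show α (ρ x) * regionMean P A f (ρ x) + (1 - α (ρ x)) * f x = G x
    simp only [hG]; ring
  -- integral of `focc f` under `Kstep`
  have hKstep_int : ∀ x, ∫ z, focc f z ∂(Kstep x) = ∫ x', G x' ∂(K x) := by
    intro x
    rw [integral_bind' (K x) hstepm hstepP hfoccm hfocc0 hfocc1]
    simp_rw [hstep_int]
  -- integral over the occluded chain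
  have hoccint : ∫ z, focc f z ∂(evolveF (Kocc P A ρ α (fun x => K x)) ν (n + 1))
      = ∫ x, G x ∂(evolveF (fun x => K x) μ (n + 1)) := by
    haveI := hev n
    rw [hstruct n, integral_bind' _ hKstepm hKstepP hfoccm hfocc0 hfocc1]
    simp_rw [hKstep_int]
    rw [← integral_bind' _ hKm (fun x => inferInstance) hGm (fun x => (hG01 x).1)
      (fun x => (hG01 x).2)]
    rfl
  -- integral under the stationary occluded measure
  have hPocc_int : ∫ z, focc f z ∂(Pocc P A ρ α) = ∫ x, G x ∂P := by
    have : Pocc P A ρ α = P.bind step := by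
      unfold Pocc
      congr 1
      funext x
      exact (hstep_eq x).symm
    rw [this, integral_bind' P hstepm hstepP hfoccm hfocc0 hfocc1]
    simp_rw [hstep_int]
  rw [hoccint, hPocc_int]
  exact hconv G hGm hG01 (n + 1) ht

end OcclusionPaper
end
end

section
/- Correctness of the restricted rejection sampler: let Q be a probability measure on X with P absolutely continuous with respect to Q, and let w̃ := Z·(dP/dQ) for some constant Z > 0 be the unnormalised Radon–Nikodym derivative. Fix C > 0 and set X_C := {y ∈ X : w̃(y)/C ≤ 1}, and assume P(X_C) > 0. Let Y ∼ Q and U ∼ Uniform[0,1] be independent. Then conditionally on the event {U ≤ w̃(Y)/C} ∩ {Y ∈ X_C}, the law of Y is P conditioned to X_C: for every measurable A ⊆ X, ℙ(Y ∈ A | U ≤ w̃(Y)/C, Y ∈ X_C) = P(A ∩ X_C)/P(X_C). -/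
open MeasureTheory ProbabilityTheory Filter

noncomputable section

namespace OcclusionPaper

/-- Correctness of the restricted rejection sampler: with `Y ~ Q` and
`U ~ Uniform[0,1]` independent, conditionally on `{U ≤ w̃(Y)/C} ∩ {Y ∈ X_C}`
(where `X_C = {y : w̃(y)/C ≤ 1}`), the law of `Y` is `P` conditioned to `X_C`. -/
theorem rejection_sampler_correctness
    {X : Type*} [MeasurableSpace X]
    (P Q : Measure X) [IsProbabilityMeasure P] [IsProbabilityMeasure Q]
    (hac : P ≪ Q)
    (Z : ℝ) (hZ : 0 < Z)
    (w : X → ℝ) (hwm : Measurable w)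
    (hw : ∀ᵐ x ∂Q, w x = Z * (P.rnDeriv Q x).toReal)
    (C : ℝ) (hC : 0 < C)
    (hXC : 0 < P {y | w y / C ≤ 1}) :
    ∀ B : Set X, MeasurableSet B →
      ((Q.prod (volume.restrict (Set.Icc (0 : ℝ) 1)))[|
          {p : X × ℝ | p.2 ≤ w p.1 / C ∧ w p.1 / C ≤ 1}]) {p : X × ℝ | p.1 ∈ B}
        = P (B ∩ {y | w y / C ≤ 1}) / P {y | w y / C ≤ 1} := by
  intro B hB
  set XC : Set X := {y | w y / C ≤ 1} with hXCdef
  have hwm' : Measurable fun x => w x / C := hwm.div_const C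
  have hXCm : MeasurableSet XC := measurableSet_le hwm' measurable_const
  set E : Set (X × ℝ) := {p : X × ℝ | p.2 ≤ w p.1 / C ∧ w p.1 / C ≤ 1} with hEdef
  have hEm : MeasurableSet E :=
    (measurableSet_le measurable_snd (hwm'.comp measurable_fst)).inter
      (measurableSet_le (hwm'.comp measurable_fst) measurable_const)
  have hw0 : ∀ᵐ x ∂Q, 0 ≤ w x := by
    filter_upwards [hw] with x hx
    rw [hx]; exact mul_nonneg hZ.le ENNReal.toReal_nonneg
  have key : ∀ S : Set X, MeasurableSet S →
      (Q.prod (volume.restrict (Set.Icc (0:ℝ) 1))) (E ∩ S ×ˢ Set.univ)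
        = ENNReal.ofReal (Z / C) * P (S ∩ XC) := by
    intro S hS
    rw [Measure.prod_apply (hEm.inter (hS.prod MeasurableSet.univ))]
    have heq : ∀ᵐ x ∂Q,
        (volume.restrict (Set.Icc (0:ℝ) 1)) (Prod.mk x ⁻¹' (E ∩ S ×ˢ Set.univ))
          = Set.indicator (S ∩ XC) (fun x => ENNReal.ofReal (w x / C)) x := by
      filter_upwards [hw0] with x hx0
      by_cases hxS : x ∈ S ∩ XC
      · have hx1 : w x / C ≤ 1 := hxS.2
        have hpre : Prod.mk x ⁻¹' (E ∩ S ×ˢ Set.univ) = Set.Iic (w x / C) := by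
          ext u
          simp [hEdef, Set.mem_Iic, hxS.1, hx1]
        rw [hpre, Set.indicator_of_mem hxS,
          Measure.restrict_apply measurableSet_Iic]
        have h2 : Set.Iic (w x / C) ∩ Set.Icc (0:ℝ) 1 = Set.Icc 0 (w x / C) := by
          ext u
          constructor
          · rintro ⟨h1, h2, h3⟩; exact ⟨h2, h1⟩
          · rintro ⟨h1, h2⟩; exact ⟨h2, h1, h2.trans hx1⟩
        rw [h2, Real.volume_Icc, sub_zero]
      · have hpre : Prod.mk x ⁻¹' (E ∩ S ×ˢ Set.univ) = ∅ := by
          ext u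
          simp only [Set.mem_preimage, Set.mem_inter_iff, Set.mem_prod, Set.mem_univ,
            and_true, Set.mem_empty_iff_false, iff_false, hEdef, Set.mem_setOf_eq]
          rintro ⟨⟨_, h1⟩, hS'⟩
          exact hxS ⟨hS', h1⟩
        rw [hpre, Set.indicator_of_notMem hxS]
        simp
    rw [lintegral_congr_ae heq, lintegral_indicator (hS.inter hXCm)]
    have h2 : ∀ᵐ x ∂Q, ENNReal.ofReal (w x / C)
        = ENNReal.ofReal (Z / C) * P.rnDeriv Q x := by
      filter_upwards [hw, Measure.rnDeriv_lt_top P Q] with x hx hlt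
      have harith : Z * ((P.rnDeriv Q) x).toReal / C = (Z / C) * ((P.rnDeriv Q) x).toReal := by
        ring
      rw [hx, harith, ENNReal.ofReal_mul (by positivity), ENNReal.ofReal_toReal hlt.ne]
    rw [lintegral_congr_ae (ae_restrict_of_ae h2)]
    rw [lintegral_const_mul' _ _ ENNReal.ofReal_ne_top,
      Measure.setLIntegral_rnDeriv hac]
  have hBset : {p : X × ℝ | p.1 ∈ B} = B ×ˢ (Set.univ : Set ℝ) := by
    ext p; simp
  have hE : (Q.prod (volume.restrict (Set.Icc (0:ℝ) 1))) E
      = ENNReal.ofReal (Z / C) * P XC := by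
    have h := key Set.univ MeasurableSet.univ
    simpa using h
  rw [ProbabilityTheory.cond_apply hEm, hBset, key B hB, hE]
  have ha0 : (ENNReal.ofReal (Z / C)) ≠ 0 :=
    (ENNReal.ofReal_pos.mpr (div_pos hZ hC)).ne'
  have haT : (ENNReal.ofReal (Z / C)) ≠ ⊤ := ENNReal.ofReal_ne_top
  rw [ENNReal.mul_inv (Or.inl ha0) (Or.inl haT), div_eq_mul_inv]
  calc (ENNReal.ofReal (Z / C))⁻¹ * (P XC)⁻¹ * (ENNReal.ofReal (Z / C) * P (B ∩ XC))
      = ((ENNReal.ofReal (Z / C))⁻¹ * ENNReal.ofReal (Z / C)) * (P (B ∩ XC) * (P XC)⁻¹) := by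
        ring
    _ = P (B ∩ XC) * (P XC)⁻¹ := by
        rw [ENNReal.inv_mul_cancel ha0 haT, one_mul]

end OcclusionPaper
end
end
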